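/- Let l₁ and l₂ be two distinct lines in ℝ³ passing through a common point P. Then the subgroup of the isometry group of ℝ³ generated by all rotations about l₁ together with all rotations about l₂ equals the group of all orientation-preserving isometries of ℝ³ fixing P; that is, every orientation-preserving isometry of ℝ³ that fixes P is a finite composition of rotations about l₁ and rotations about l₂. -/

import Mathlib

open Module Submodule RealInnerProductSpace

noncomputable abbrev E3 := EuclideanSpace ℝ (Fin 3)

noncomputable def detL (A : E3 ≃ₗᵢ[ℝ] E3) : ℝ :=
  LinearMap.det (A.toLinearEquiv : E3 →ₗ[ℝ] E3)

lemma exists_unit_orth (w y : E3) : ∃ n : E3, ‖n‖ = 1 ∧ ⟪w, n⟫ = 0 ∧ ⟪y, n⟫ = 0 := by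
  classical
  set K : Submodule ℝ E3 := span ℝ {w, y} with hK
  have hfr : finrank ℝ K ≤ 2 := by
    have h1 : finrank ℝ K ≤ ({w, y} : Set E3).toFinset.card :=
      finrank_span_le_card ({w, y} : Set E3)
    refine h1.trans ?_
    have h2 : ({w, y} : Set E3).toFinset ⊆ {w, y} := by simp [Set.toFinset_subset]
    calc ({w, y} : Set E3).toFinset.card ≤ ({w, y} : Finset E3).card := Finset.card_le_card h2
      _ ≤ 2 := (Finset.card_insert_le _ _).trans (by simp)
  have horth : finrank ℝ K + finrank ℝ Kᗮ = 3 := by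
    rw [K.finrank_add_finrank_orthogonal]
    simp [finrank_euclideanSpace]
  have hne : Kᗮ ≠ ⊥ := by
    intro h
    rw [h] at horth
    simp [finrank_bot] at horth
    omega
  obtain ⟨z, hz, hz0⟩ := Submodule.exists_mem_ne_zero_of_ne_bot hne
  refine ⟨‖z‖⁻¹ • z, ?_, ?_, ?_⟩
  · simp [norm_smul, norm_ne_zero_iff.2 hz0, inv_mul_cancel₀]
  · rw [real_inner_smul_right]
    have : ⟪w, z⟫ = 0 := hz w (subset_span (by simp))
    simp [this]
  · rw [real_inner_smul_right]
    have : ⟪y, z⟫ = 0 := hz y (subset_span (by simp))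
    simp [this]

lemma detL_one : detL 1 = 1 := by
  have : ((1 : E3 ≃ₗᵢ[ℝ] E3).toLinearEquiv : E3 →ₗ[ℝ] E3) = LinearMap.id := rfl
  rw [detL, this, LinearMap.det_id]
lemma detL_mul (A B : E3 ≃ₗᵢ[ℝ] E3) : detL (A * B) = detL A * detL B := by
  have : ((A * B).toLinearEquiv : E3 →ₗ[ℝ] E3)
      = (A.toLinearEquiv : E3 →ₗ[ℝ] E3).comp (B.toLinearEquiv : E3 →ₗ[ℝ] E3) := rfl
  rw [detL, this, LinearMap.det_comp]; rfl
lemma detL_inv (A : E3 ≃ₗᵢ[ℝ] E3) (h : detL A = 1) : detL A⁻¹ = 1 := by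
  have := detL_mul A⁻¹ A
  rw [inv_mul_cancel, detL_one, h, mul_one] at this
  exact this.symm
lemma detL_reflection_hyperplane (z : E3) (hz : z ≠ 0) :
    detL (reflection (ℝ ∙ z)ᗮ) = -1 := by
  have h1 : detL (reflection (ℝ ∙ z)ᗮ) = LinearMap.det (reflection (ℝ ∙ z)ᗮ).toLinearMap := rfl
  rw [h1, det_reflection, Submodule.orthogonal_orthogonal, finrank_span_singleton hz, pow_one]

lemma exists_rotation (w x y : E3) (hn : ‖x‖ = ‖y‖) (hi : ⟪w, x⟫ = ⟪w, y⟫) :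
    ∃ A : E3 ≃ₗᵢ[ℝ] E3, detL A = 1 ∧ A w = w ∧ A x = y := by
  by_cases hxy : x = y
  · refine ⟨1, ?_, rfl, by rw [hxy]; rfl⟩
    have : ((1 : E3 ≃ₗᵢ[ℝ] E3).toLinearEquiv : E3 →ₗ[ℝ] E3) = LinearMap.id := rfl
    rw [detL, this, LinearMap.det_id]
  · obtain ⟨n, hn1, hnw, hny⟩ := exists_unit_orth w y
    have hn0 : n ≠ 0 := by intro h; rw [h] at hn1; simp at hn1
    set R1 := reflection (ℝ ∙ (x - y))ᗮ with hR1
    set R2 := reflection (ℝ ∙ n)ᗮ with hR2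
    have hR1x : R1 x = y := reflection_sub hn
    have hR1w : R1 w = w := by
      apply reflection_mem_subspace_eq_self
      rw [Submodule.mem_orthogonal_singleton_iff_inner_right]
      rw [inner_sub_left]
      have h1 := real_inner_comm x w
      have h2 := real_inner_comm y w
      linarith [hi]
    have hR2w : R2 w = w := by
      apply reflection_mem_subspace_eq_self
      rw [Submodule.mem_orthogonal_singleton_iff_inner_right]
      rw [real_inner_comm]; exact hnw
    have hR2y : R2 y = y := by
      apply reflection_mem_subspace_eq_self
      rw [Submodule.mem_orthogonal_singleton_iff_inner_right]
      rw [real_inner_comm]; exact hny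
    refine ⟨R2 * R1, ?_, ?_, ?_⟩
    · have hmul : detL (R2 * R1) = detL R2 * detL R1 := by
        have : ((R2 * R1).toLinearEquiv : E3 →ₗ[ℝ] E3)
            = (R2.toLinearEquiv : E3 →ₗ[ℝ] E3).comp (R1.toLinearEquiv : E3 →ₗ[ℝ] E3) := rfl
        rw [detL, this, LinearMap.det_comp]; rfl
      rw [hmul, detL_reflection_hyperplane n hn0,
        detL_reflection_hyperplane (x - y) (sub_ne_zero.2 hxy)]
      norm_num
    · show R2 (R1 w) = w
      rw [hR1w, hR2w]
    · show R2 (R1 x) = y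
      rw [hR1x, hR2y]

lemma lin_of_mul (g h : E3 ≃ᵃⁱ[ℝ] E3) :
    (g * h).linearIsometryEquiv = g.linearIsometryEquiv * h.linearIsometryEquiv := by
  apply LinearIsometryEquiv.ext
  intro w
  have h1 := (g * h).map_vsub w 0
  have h2 := g.map_vsub (h w) (h 0)
  have h3 := h.map_vsub w 0
  simp only [vsub_eq_sub, sub_zero] at h1 h3
  simp only [vsub_eq_sub] at h2
  show (g * h).linearIsometryEquiv w = g.linearIsometryEquiv (h.linearIsometryEquiv w)
  rw [h1, h3, h2]
  rfl

lemma lin_of_one : (1 : E3 ≃ᵃⁱ[ℝ] E3).linearIsometryEquiv = 1 := by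
  apply LinearIsometryEquiv.ext
  intro w
  have h1 := (1 : E3 ≃ᵃⁱ[ℝ] E3).map_vsub w 0
  simp only [vsub_eq_sub, sub_zero] at h1
  rw [h1]
  show (1 : E3 ≃ᵃⁱ[ℝ] E3) w - (1 : E3 ≃ᵃⁱ[ℝ] E3) 0 = w
  simp

lemma lin_of_inv (g : E3 ≃ᵃⁱ[ℝ] E3) :
    (g⁻¹).linearIsometryEquiv = (g.linearIsometryEquiv)⁻¹ := by
  apply eq_inv_of_mul_eq_one_left
  rw [← lin_of_mul, inv_mul_cancel, lin_of_one]

set_option maxHeartbeats 1000000 in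
lemma lin_gen (u v : E3) (hu : ‖u‖ = 1) (hv : ‖v‖ = 1) (hc2 : ⟪u, v⟫ ^ 2 < 1)
    (A : E3 ≃ₗᵢ[ℝ] E3) (hA : detL A = 1) :
    A ∈ Subgroup.closure {B : E3 ≃ₗᵢ[ℝ] E3 |
      (detL B = 1 ∧ B u = u) ∨ (detL B = 1 ∧ B v = v)} := by
  set K := Subgroup.closure {B : E3 ≃ₗᵢ[ℝ] E3 |
      (detL B = 1 ∧ B u = u) ∨ (detL B = 1 ∧ B v = v)} with hKdef
  set S : Set E3 := {x | ∃ h ∈ K, h u = x} with hSdef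
  have huS : u ∈ S := ⟨1, one_mem K, rfl⟩
  have hdetK : ∀ h ∈ K, detL h = 1 := by
    intro h hh
    induction hh using Subgroup.closure_induction with
    | mem x hx => rcases hx with ⟨d, _⟩ | ⟨d, _⟩ <;> exact d
    | one => exact detL_one
    | mul x y hx hy ihx ihy => rw [detL_mul, ihx, ihy, mul_one]
    | inv x hx ihx => exact detL_inv x ihx
  have hnormS : ∀ x ∈ S, ‖x‖ = 1 := by
    rintro x ⟨h, _, rfl⟩
    rw [h.norm_map, hu]
  -- "good a" : all rotations about a lie in K
  have hgood_u : ∀ B : E3 ≃ₗᵢ[ℝ] E3, detL B = 1 → B u = u → B ∈ K :=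
    fun B h1 h2 => Subgroup.subset_closure (Or.inl ⟨h1, h2⟩)
  have hgood_v : ∀ B : E3 ≃ₗᵢ[ℝ] E3, detL B = 1 → B v = v → B ∈ K :=
    fun B h1 h2 => Subgroup.subset_closure (Or.inr ⟨h1, h2⟩)
  have hgood_S : ∀ a ∈ S, ∀ B : E3 ≃ₗᵢ[ℝ] E3, detL B = 1 → B a = a → B ∈ K := by
    rintro a ⟨h, hhK, rfl⟩ B h1 h2
    have hdh : detL h = 1 := hdetK h hhK
    have hmem : h⁻¹ * B * h ∈ K := by
      apply hgood_u
      · rw [detL_mul, detL_mul, detL_inv h hdh, h1, one_mul, hdh, mul_one]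
      · show h⁻¹ ((B (h u))) = u
        rw [h2]
        exact h.symm_apply_apply u
    have : B = h * (h⁻¹ * B * h) * h⁻¹ := by group
    rw [this]
    exact mul_mem (mul_mem hhK hmem) (inv_mem hhK)
  -- the stepping lemma
  have hstep : ∀ a : E3, (∀ B : E3 ≃ₗᵢ[ℝ] E3, detL B = 1 → B a = a → B ∈ K) →
      ∀ x ∈ S, ∀ y : E3, ‖y‖ = 1 → ⟪a, x⟫ = ⟪a, y⟫ → y ∈ S := by
    rintro a hKa x hxS y hy hinner
    obtain ⟨B, hB1, _, hBxy⟩ := exists_rotation a x y ((hnormS x hxS).trans hy.symm) hinner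
    obtain ⟨h, hhK, rfl⟩ := hxS
    exact ⟨B * h, mul_mem (hKa B hB1 ‹_›) hhK, hBxy⟩
  -- base cap around u
  have hcap0 : ∀ y : E3, ‖y‖ = 1 → 2 * ⟪u, v⟫ ^ 2 - 1 ≤ ⟪u, y⟫ → y ∈ S := by
    intro y hy hd
    obtain ⟨n, hn1, hun, hvn⟩ := exists_unit_orth u v
    set c : ℝ := ⟪u, v⟫ with hc
    set d : ℝ := ⟪u, y⟫ with hdd
    set s2 : ℝ := 1 - c ^ 2 with hs2
    have hs2pos : 0 < s2 := by simp only [hs2]; linarith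
    set t : ℝ := d - c ^ 2 with ht
    have hd1 : d ≤ 1 := by
      have := real_inner_le_norm u y
      rw [hu, hy] at this; linarith
    have hts : t ^ 2 ≤ s2 ^ 2 := by
      apply sq_le_sq'
      · simp only [ht, hs2]; linarith
      · simp only [ht, hs2]; linarith
    have hμnn : 0 ≤ s2 - t ^ 2 / s2 := by
      rw [sub_nonneg, div_le_iff₀ hs2pos]
      nlinarith
    set μ : ℝ := Real.sqrt (s2 - t ^ 2 / s2) with hμ
    have hμ2 : μ ^ 2 = s2 - t ^ 2 / s2 := Real.sq_sqrt hμnn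
    have hvu : ⟪v, u⟫ = c := by rw [real_inner_comm]
    have hnu : ⟪n, u⟫ = 0 := by rw [real_inner_comm]; exact hun
    have hnv : ⟪n, v⟫ = 0 := by rw [real_inner_comm]; exact hvn
    have huu : ⟪u, u⟫ = (1:ℝ) := by
      rw [real_inner_self_eq_norm_sq, hu]; norm_num
    have hvv : ⟪v, v⟫ = (1:ℝ) := by
      rw [real_inner_self_eq_norm_sq, hv]; norm_num
    have hnn : ⟪n, n⟫ = (1:ℝ) := by
      rw [real_inner_self_eq_norm_sq, hn1]; norm_num
    obtain ⟨z, hzdef⟩ : ∃ z : E3, z = (t / s2) • u + (c - (t / s2) * c) • v + μ • n :=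
      ⟨_, rfl⟩
    have hvz : ⟪v, z⟫ = c := by
      rw [hzdef]
      simp only [inner_add_right, real_inner_smul_right, hvv, hvn, hvu]
      field_simp
      ring
    have huz : ⟪u, z⟫ = d := by
      rw [hzdef]
      simp only [inner_add_right, real_inner_smul_right, huu, hun, ← hc]
      field_simp
      ring
    have hz1 : ‖z‖ = 1 := by
      have hzz : ⟪z, z⟫ = (1:ℝ) := by
        rw [hzdef]
        simp only [inner_add_right, inner_add_left, real_inner_smul_right,
          real_inner_smul_left, huu, hvv, hnn, hun, hvn, hvu, hnu, hnv, ← hc]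
        rw [show μ * (μ * 1) = μ ^ 2 by ring, hμ2, hs2, ht]
        have h1 : (1 : ℝ) - c ^ 2 ≠ 0 := by nlinarith
        field_simp
        ring
      have := real_inner_self_eq_norm_sq z
      rw [hzz] at this
      nlinarith [norm_nonneg z]
    have hzS : z ∈ S := by
      apply hstep v hgood_v u huS z hz1
      rw [hvz, real_inner_comm, ← hc]
    exact hstep u hgood_u z hzS y hy (by rw [huz, hdd])
  -- doubling the cap
  have hdouble : ∀ k : ℝ, 0 < k → (∀ z : E3, ‖z‖ = 1 → k ≤ ⟪u, z⟫ → z ∈ S) →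
      ∀ y : E3, ‖y‖ = 1 → 2 * k ^ 2 - 1 ≤ ⟪u, y⟫ → y ∈ S := by
    intro k hk hcap y hy hd
    set d : ℝ := ⟪u, y⟫ with hdd
    have huu : ⟪u, u⟫ = (1:ℝ) := by
      rw [real_inner_self_eq_norm_sq, hu]; norm_num
    have hd1 : -1 < d := by nlinarith
    have hN2 : ‖u + y‖ ^ 2 = 2 + 2 * d := by
      rw [norm_add_sq_real, hu, hy]; simp [hdd]; ring
    have hNpos : 0 < ‖u + y‖ := by
      have : ‖u + y‖ ^ 2 > 0 := by rw [hN2]; linarith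
      nlinarith [norm_nonneg (u + y)]
    obtain ⟨a, hadef⟩ : ∃ a : E3, a = ‖u + y‖⁻¹ • (u + y) := ⟨_, rfl⟩
    have ha1 : ‖a‖ = 1 := by
      rw [hadef, norm_smul]
      simp [hNpos.ne']
    have hua : ⟪u, a⟫ = ‖u + y‖⁻¹ * (1 + d) := by
      rw [hadef, real_inner_smul_right, inner_add_right, huu, hdd]
    have h5 : ⟪y, u⟫ = d := by rw [real_inner_comm]
    have h6 : ⟪y, y⟫ = (1:ℝ) := by rw [real_inner_self_eq_norm_sq, hy]; norm_num
    have hya : ⟪y, a⟫ = ‖u + y‖⁻¹ * (1 + d) := by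
      rw [hadef, real_inner_smul_right, inner_add_right, h5, h6]
      ring
    have huak : k ≤ ⟪u, a⟫ := by
      rw [hua]
      have hkN : k * ‖u + y‖ ≤ 1 + d := by
        nlinarith [hN2, hNpos, hd1, hk, hd, mul_pos hk hNpos]
      have h7 : ‖u + y‖⁻¹ * (k * ‖u + y‖) ≤ ‖u + y‖⁻¹ * (1 + d) :=
        mul_le_mul_of_nonneg_left hkN (by positivity)
      have h8 : ‖u + y‖⁻¹ * (k * ‖u + y‖) = k := by
        field_simp
      linarith [h7, h8]
    have haS : a ∈ S := hcap a ha1 huak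
    refine hstep a (hgood_S a haS) u huS y hy ?_
    linarith [real_inner_comm a u, real_inner_comm a y, hua, hya]
  -- if the cap threshold is nonpositive we get everything
  have hall : ∀ k : ℝ, k ≤ 0 → (∀ z : E3, ‖z‖ = 1 → k ≤ ⟪u, z⟫ → z ∈ S) →
      ∀ y : E3, ‖y‖ = 1 → y ∈ S := by
    intro k hk hcap y hy
    obtain ⟨a, ha1, hua, hya⟩ := exists_unit_orth u y
    have haS : a ∈ S := hcap a ha1 (by rw [hua]; exact hk)
    refine hstep a (hgood_S a haS) u huS y hy ?_
    linarith [real_inner_comm a u, real_inner_comm a y, hua, hya]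
  -- iterate doubling
  have hreach : ∀ m : ℕ, ∀ r : ℝ, 0 < r → r ≤ Real.pi / 2 →
      (∀ z : E3, ‖z‖ = 1 → Real.cos r ≤ ⟪u, z⟫ → z ∈ S) →
      Real.pi / 2 < 2 ^ m * r → ∀ y : E3, ‖y‖ = 1 → y ∈ S := by
    intro m
    induction m with
    | zero =>
      intro r hr hrπ hcap h2 y hy
      norm_num at h2
      linarith
    | succ m ih =>
      intro r hr hrπ hcap h2 y hy
      by_cases hcpos : Real.cos r ≤ 0
      · exact hall _ hcpos hcap y hy
      push_neg at hcpos
      have hcap2 : ∀ z : E3, ‖z‖ = 1 → Real.cos (2 * r) ≤ ⟪u, z⟫ → z ∈ S := by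
        intro z hz hzc
        refine hdouble (Real.cos r) hcpos hcap z hz ?_
        rw [← Real.cos_two_mul]
        exact hzc
      by_cases h2r : 2 * r ≤ Real.pi / 2
      · refine ih (2 * r) (by linarith) h2r hcap2 ?_ y hy
        calc Real.pi / 2 < 2 ^ (m + 1) * r := h2
          _ = 2 ^ m * (2 * r) := by ring
      · push_neg at h2r
        refine hall (Real.cos (2 * r)) ?_ hcap2 y hy
        apply Real.cos_nonpos_of_pi_div_two_le_of_le h2r.le
        have hπ := Real.pi_pos
        linarith
  -- the orbit of u is the whole unit sphere
  have hsphere : ∀ y : E3, ‖y‖ = 1 → y ∈ S := by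
    intro y hy
    set k₀ : ℝ := 2 * ⟪u, v⟫ ^ 2 - 1 with hk₀
    by_cases hk : k₀ ≤ 0
    · exact hall k₀ hk (fun z hz hzc => hcap0 z hz hzc) y hy
    push_neg at hk
    have hk1 : k₀ < 1 := by simp only [hk₀]; nlinarith
    set r : ℝ := Real.arccos k₀ with hr
    have hrpos : 0 < r := Real.arccos_pos.2 hk1
    have hrlt : r < Real.pi / 2 := Real.arccos_lt_pi_div_two.2 hk
    have hcos : Real.cos r = k₀ := Real.cos_arccos (by linarith) hk1.le
    obtain ⟨m, hm⟩ := pow_unbounded_of_one_lt (Real.pi / 2 / r) (one_lt_two (α := ℝ))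
    refine hreach m r hrpos hrlt.le ?_ ?_ y hy
    · intro z hz hzc
      exact hcap0 z hz (by rw [← hcos]; exact hzc)
    · rw [div_lt_iff₀ hrpos] at hm
      linarith
  -- conclude
  have hAu : A u ∈ S := hsphere (A u) (by rw [A.norm_map, hu])
  obtain ⟨h, hhK, hhu⟩ := hAu
  have hBdet : detL (h⁻¹ * A) = 1 := by
    rw [detL_mul, detL_inv h (hdetK h hhK), hA, mul_one]
  have hBu : (h⁻¹ * A) u = u := by
    show h.symm (A u) = u
    rw [← hhu, h.symm_apply_apply]
  have hB : h⁻¹ * A ∈ K := hgood_u _ hBdet hBu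
  have : A = h * (h⁻¹ * A) := by group
  rw [this]
  exact mul_mem hhK hB

/-- A line in `ℝ³`: a one-dimensional (nonempty) affine subspace. -/
def IsLine (l : AffineSubspace ℝ (EuclideanSpace ℝ (Fin 3))) : Prop :=
  (l : Set (EuclideanSpace ℝ (Fin 3))).Nonempty ∧
    Module.finrank ℝ l.direction = 1

/-- An isometry of `ℝ³` is orientation-preserving if the determinant of its linear
part is `1`. -/
def IsOrientationPreserving
    (f : EuclideanSpace ℝ (Fin 3) ≃ᵃⁱ[ℝ] EuclideanSpace ℝ (Fin 3)) : Prop :=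
  LinearMap.det (f.linearIsometryEquiv.toLinearEquiv :
      EuclideanSpace ℝ (Fin 3) →ₗ[ℝ] EuclideanSpace ℝ (Fin 3)) = 1

/-- A rotation about a line `l`: an orientation-preserving isometry of `ℝ³`
fixing every point of `l`. -/
def IsRotationAbout (l : AffineSubspace ℝ (EuclideanSpace ℝ (Fin 3)))
    (f : EuclideanSpace ℝ (Fin 3) ≃ᵃⁱ[ℝ] EuclideanSpace ℝ (Fin 3)) : Prop :=
  IsOrientationPreserving f ∧ ∀ p ∈ l, f p = p

-- helper : extract a unit direction vector
lemma unit_dir (l : AffineSubspace ℝ (EuclideanSpace ℝ (Fin 3))) (hl : IsLine l) :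
    ∃ u : E3, ‖u‖ = 1 ∧ l.direction = ℝ ∙ u := by
  obtain ⟨u₀, hu₀, hspan⟩ := (finrank_eq_one_iff' ).1 hl.2
  have hu₀0 : (u₀ : E3) ≠ 0 := fun h => hu₀ (Subtype.coe_injective h)
  have hd : l.direction = ℝ ∙ (u₀ : E3) := by
    apply le_antisymm
    · intro w hw
      obtain ⟨c, hc⟩ := hspan ⟨w, hw⟩
      have : c • (u₀ : E3) = w := congrArg Subtype.val hc
      rw [← this]
      exact smul_mem _ _ (mem_span_singleton_self _)
    · rw [span_le, Set.singleton_subset_iff]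
      exact u₀.2
  refine ⟨‖(u₀ : E3)‖⁻¹ • u₀, ?_, ?_⟩
  · rw [norm_smul]
    simp [hu₀0]
  · refine hd.trans ?_
    symm
    apply span_singleton_smul_eq
    exact IsUnit.inv (Ne.isUnit (norm_ne_zero_iff.2 hu₀0))

set_option maxHeartbeats 1000000 in
/-- For two distinct lines `l₁, l₂` in `ℝ³` through a common point `P`, the subgroup of
the isometry group generated by all rotations about `l₁` and all rotations about `l₂`
is exactly the group of orientation-preserving isometries of `ℝ³` fixing `P`. -/
theorem subgroup_generated_by_rotations_about_intersecting_lines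
    (l₁ l₂ : AffineSubspace ℝ (EuclideanSpace ℝ (Fin 3)))
    (hl₁ : IsLine l₁) (hl₂ : IsLine l₂) (hne : l₁ ≠ l₂)
    (P : EuclideanSpace ℝ (Fin 3)) (hP₁ : P ∈ l₁) (hP₂ : P ∈ l₂) :
    ∀ g : EuclideanSpace ℝ (Fin 3) ≃ᵃⁱ[ℝ] EuclideanSpace ℝ (Fin 3),
      g ∈ Subgroup.closure {f | IsRotationAbout l₁ f ∨ IsRotationAbout l₂ f} ↔
        (IsOrientationPreserving g ∧ g P = P) := by
  intro g
  constructor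
  · -- easy direction
    intro hg
    induction hg using Subgroup.closure_induction with
    | mem f hf =>
      rcases hf with ⟨hdet, hfix⟩ | ⟨hdet, hfix⟩
      · exact ⟨hdet, hfix P hP₁⟩
      · exact ⟨hdet, hfix P hP₂⟩
    | one =>
      refine ⟨?_, rfl⟩
      show detL (1 : E3 ≃ᵃⁱ[ℝ] E3).linearIsometryEquiv = 1
      rw [lin_of_one]
      exact detL_one
    | mul x y hx hy ihx ihy =>
      refine ⟨?_, ?_⟩
      · show detL (x * y).linearIsometryEquiv = 1
        rw [lin_of_mul, detL_mul]
        have h1 : detL x.linearIsometryEquiv = 1 := ihx.1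
        have h2 : detL y.linearIsometryEquiv = 1 := ihy.1
        rw [h1, h2, mul_one]
      · show x (y P) = P
        rw [ihy.2, ihx.2]
    | inv x hx ihx =>
      refine ⟨?_, ?_⟩
      · show detL (x⁻¹).linearIsometryEquiv = 1
        rw [lin_of_inv]
        exact detL_inv _ ihx.1
      · show x.symm P = P
        nth_rewrite 1 [← ihx.2]
        exact x.symm_apply_apply P
  · -- hard direction
    rintro ⟨hdet, hfix⟩
    obtain ⟨u, hu, hdiru⟩ := unit_dir l₁ hl₁
    obtain ⟨v, hv, hdirv⟩ := unit_dir l₂ hl₂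
    have hc2 : ⟪u, v⟫ ^ 2 < 1 := by
      rcases lt_or_ge (⟪u, v⟫ ^ 2) 1 with h | h
      · exact h
      · exfalso
        have hcs : |⟪u, v⟫| ≤ 1 := by
          have := abs_real_inner_le_norm u v
          rw [hu, hv] at this; simpa using this
        have heq : |⟪u, v⟫| = 1 := by nlinarith [abs_nonneg ⟪u, v⟫, sq_abs ⟪u, v⟫]
        have hu0 : u ≠ 0 := fun h0 => by rw [h0] at hu; simp at hu
        have hv0 : v ≠ 0 := fun h0 => by rw [h0] at hv; simp at hv
        have : ‖(⟪u, v⟫ : ℝ)‖ = ‖u‖ * ‖v‖ := by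
          rw [Real.norm_eq_abs, heq, hu, hv]; norm_num
        obtain ⟨r, hr0, hrv⟩ := (norm_inner_eq_norm_iff hu0 hv0).1 this
        have hdir : l₁.direction = l₂.direction := by
          rw [hdiru, hdirv, hrv]
          exact (span_singleton_smul_eq (Ne.isUnit hr0) u).symm
        exact hne (AffineSubspace.ext_of_direction_eq hdir ⟨P, hP₁, hP₂⟩)
    -- the conjugating map from linear to affine isometries
    set σ : (E3 ≃ₗᵢ[ℝ] E3) → (E3 ≃ᵃⁱ[ℝ] E3) := fun A =>
      ((AffineIsometryEquiv.constVAdd ℝ E3 (-P)).trans A.toAffineIsometryEquiv).trans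
        (AffineIsometryEquiv.constVAdd ℝ E3 P) with hσ
    have hσ_apply : ∀ (A : E3 ≃ₗᵢ[ℝ] E3) (x : E3), σ A x = P + A (-P + x) := by
      intro A x
      rfl
    have hσ_lin : ∀ A : E3 ≃ₗᵢ[ℝ] E3, (σ A).linearIsometryEquiv = A := by
      intro A
      apply LinearIsometryEquiv.ext
      intro w
      have h1 := (σ A).map_vsub (w + P) P
      simp only [vsub_eq_sub, add_sub_cancel_right] at h1
      rw [h1, hσ_apply, hσ_apply]
      have e1 : -P + (w + P) = w := by abel
      have e2 : -P + P = (0 : E3) := by abel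
      rw [e1, e2, map_zero]
      abel
    have hσ_mul : ∀ A B : E3 ≃ₗᵢ[ℝ] E3, σ (A * B) = σ A * σ B := by
      intro A B
      apply AffineIsometryEquiv.ext
      intro x
      show σ (A * B) x = σ A (σ B x)
      rw [hσ_apply, hσ_apply, hσ_apply]
      have e1 : -P + (P + B (-P + x)) = B (-P + x) := by abel
      rw [e1]
      rfl
    have hσ_one : σ 1 = 1 := by
      apply AffineIsometryEquiv.ext
      intro x
      rw [hσ_apply]
      show P + (-P + x) = x
      abel
    have hσ_inv : ∀ A : E3 ≃ₗᵢ[ℝ] E3, σ A⁻¹ = (σ A)⁻¹ := by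
      intro A
      apply eq_inv_of_mul_eq_one_left
      rw [← hσ_mul, inv_mul_cancel, hσ_one]
    have hσ_g : σ g.linearIsometryEquiv = g := by
      apply AffineIsometryEquiv.ext
      intro x
      rw [hσ_apply]
      have h1 : g ((x - P) +ᵥ P) = g.linearIsometryEquiv (x - P) +ᵥ g P :=
        g.map_vadd P (x - P)
      have e1 : (x - P) +ᵥ P = x := by
        rw [vadd_eq_add]; abel
      rw [e1, hfix, vadd_eq_add] at h1
      rw [h1]
      have e2 : -P + x = x - P := by abel
      rw [e2]
      abel
    have hA : detL g.linearIsometryEquiv = 1 := hdet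
    have hmem := lin_gen u v hu hv hc2 g.linearIsometryEquiv hA
    have key : ∀ B : E3 ≃ₗᵢ[ℝ] E3, B ∈ Subgroup.closure {B : E3 ≃ₗᵢ[ℝ] E3 |
        (detL B = 1 ∧ B u = u) ∨ (detL B = 1 ∧ B v = v)} → σ B ∈
        Subgroup.closure {f : E3 ≃ᵃⁱ[ℝ] E3 | IsRotationAbout l₁ f ∨ IsRotationAbout l₂ f} := by
      intro C hC
      induction hC using Subgroup.closure_induction with
      | mem B hB =>
        apply Subgroup.subset_closure
        rcases hB with ⟨hdB, hBfix⟩ | ⟨hdB, hBfix⟩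
        · left
          constructor
          · show detL (σ B).linearIsometryEquiv = 1
            rw [hσ_lin]; exact hdB
          · intro p hp
            have hpd : p -ᵥ P ∈ l₁.direction := AffineSubspace.vsub_mem_direction hp hP₁
            rw [hdiru, mem_span_singleton] at hpd
            obtain ⟨r, hr⟩ := hpd
            rw [hσ_apply]
            have e2 : -P + p = p -ᵥ P := by rw [vsub_eq_sub]; abel
            rw [e2, ← hr, map_smul, hBfix, hr, vsub_eq_sub]
            abel
        · right
          constructor
          · show detL (σ B).linearIsometryEquiv = 1
            rw [hσ_lin]; exact hdB
          · intro p hp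
            have hpd : p -ᵥ P ∈ l₂.direction := AffineSubspace.vsub_mem_direction hp hP₂
            rw [hdirv, mem_span_singleton] at hpd
            obtain ⟨r, hr⟩ := hpd
            rw [hσ_apply]
            have e2 : -P + p = p -ᵥ P := by rw [vsub_eq_sub]; abel
            rw [e2, ← hr, map_smul, hBfix, hr, vsub_eq_sub]
            abel
      | one => rw [hσ_one]; exact one_mem _
      | mul x y hx hy ihx ihy => rw [hσ_mul]; exact mul_mem ihx ihy
      | inv x hx ihx => rw [hσ_inv]; exact inv_mem ihx
    have hσmem := key g.linearIsometryEquiv hmem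
    rw [hσ_g] at hσmem
    exact hσmem
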